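/- Let (Ω, P) be a finite probability space with binary random variables ỹ, y* : Ω → {0,1}, with P(y*=0) > 0, P(y*=1) > 0, P(ỹ=0) > 0, and P(ỹ=1) > 0. Suppose both noise rates are strictly less than 1/2: P(ỹ=0|y*=1) < 1/2 and P(ỹ=1|y*=0) < 1/2. Define the ideal predicted probability p(ω) = P(ỹ=1 | y* = y*(ω)), the threshold LB = E[p | ỹ=1], and the threshold UB = E[p | ỹ=0]. Define the confident positive set CPS = {ω : p(ω) ≥ LB} and the confident negative set CNS = {ω : p(ω) ≤ UB}. Then the estimated mislabeled set {ω : ỹ(ω)=0 and ω ∈ CPS} ∪ {ω : ỹ(ω)=1 and ω ∈ CNS} contains the true mislabeled set {ω : ỹ(ω) ≠ y*(ω)}. -/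

import Mathlib

open Finset

noncomputable def Pr {Ω : Type} [Fintype Ω] (w : Ω → ℝ) (A : Set Ω) : ℝ :=
  ∑ ω, A.indicator w ω

noncomputable def cPr {Ω : Type} [Fintype Ω] (w : Ω → ℝ) (A B : Set Ω) : ℝ :=
  Pr w (A ∩ B) / Pr w B

noncomputable def cExp {Ω : Type} [Fintype Ω] (w : Ω → ℝ) (f : Ω → ℝ) (B : Set Ω) : ℝ :=
  (∑ ω, B.indicator (fun ω' => w ω' * f ω') ω) / Pr w B

lemma fin2 (i : Fin 2) : i = 0 ∨ i = 1 := by omega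

lemma Pr_split {Ω : Type} [Fintype Ω] (w : Ω → ℝ) (t : Ω → Fin 2) (B : Set Ω) :
    Pr w ({ω | t ω = 0} ∩ B) + Pr w ({ω | t ω = 1} ∩ B) = Pr w B := by
  unfold Pr
  rw [← Finset.sum_add_distrib]
  refine Finset.sum_congr rfl fun ω _ => ?_
  by_cases hB : ω ∈ B
  · rcases fin2 (t ω) with h | h <;>
      simp [Set.indicator, hB, h]
  · simp [Set.indicator, hB]

lemma cExp_le {Ω : Type} [Fintype Ω] (w : Ω → ℝ) (hw : ∀ ω, 0 ≤ w ω)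
    (p : Ω → ℝ) (B : Set Ω) (hB : 0 < Pr w B) (a : ℝ) (ha : ∀ ω, p ω ≤ a) :
    cExp w p B ≤ a := by
  unfold cExp
  rw [div_le_iff₀ hB]
  have : a * Pr w B = ∑ ω, B.indicator (fun ω' => w ω' * a) ω := by
    unfold Pr
    rw [Finset.mul_sum]
    refine Finset.sum_congr rfl fun ω _ => ?_
    by_cases hB : ω ∈ B <;> simp [Set.indicator, hB, mul_comm]
  rw [this]
  refine Finset.sum_le_sum fun ω _ => ?_
  by_cases hB : ω ∈ B
  · simp only [Set.indicator_of_mem hB]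
    exact mul_le_mul_of_nonneg_left (ha ω) (hw ω)
  · simp [Set.indicator_of_notMem hB]

lemma le_cExp {Ω : Type} [Fintype Ω] (w : Ω → ℝ) (hw : ∀ ω, 0 ≤ w ω)
    (p : Ω → ℝ) (B : Set Ω) (hB : 0 < Pr w B) (b : ℝ) (hb : ∀ ω, b ≤ p ω) :
    b ≤ cExp w p B := by
  unfold cExp
  rw [le_div_iff₀ hB]
  have : b * Pr w B = ∑ ω, B.indicator (fun ω' => w ω' * b) ω := by
    unfold Pr
    rw [Finset.mul_sum]
    refine Finset.sum_congr rfl fun ω _ => ?_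
    by_cases hB : ω ∈ B <;> simp [Set.indicator, hB, mul_comm]
  rw [this]
  refine Finset.sum_le_sum fun ω _ => ?_
  by_cases hB : ω ∈ B
  · simp only [Set.indicator_of_mem hB]
    exact mul_le_mul_of_nonneg_left (hb ω) (hw ω)
  · simp [Set.indicator_of_notMem hB]

/-- Theorem 1 (single group): under ideal predicted probabilities and noise rates
below 1/2, every mislabeled instance is flagged by the DeCoLe thresholding. -/
theorem stmt4 {Ω : Type} [Fintype Ω] (w : Ω → ℝ) (ty ys : Ω → Fin 2)
    (hw : ∀ ω, 0 ≤ w ω) (hsum : ∑ ω, w ω = 1)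
    (hys0 : 0 < Pr w {ω | ys ω = 0}) (hys1 : 0 < Pr w {ω | ys ω = 1})
    (hty0 : 0 < Pr w {ω | ty ω = 0}) (hty1 : 0 < Pr w {ω | ty ω = 1})
    (hn0 : cPr w {ω | ty ω = 0} {ω | ys ω = 1} < 1/2)
    (hn1 : cPr w {ω | ty ω = 1} {ω | ys ω = 0} < 1/2)
    (p : Ω → ℝ) (hp : ∀ ω, p ω = cPr w {ω' | ty ω' = 1} {ω' | ys ω' = ys ω})
    (LB UB : ℝ)
    (hLB : LB = cExp w p {ω | ty ω = 1})
    (hUB : UB = cExp w p {ω | ty ω = 0}) :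
    {ω | ty ω ≠ ys ω} ⊆
      ({ω | ty ω = 0} ∩ {ω | LB ≤ p ω}) ∪ ({ω | ty ω = 1} ∩ {ω | p ω ≤ UB}) := by
  set a := cPr w {ω | ty ω = 1} {ω | ys ω = 1} with ha_def
  set b := cPr w {ω | ty ω = 1} {ω | ys ω = 0} with hb_def
  -- a > 1/2
  have hcompl : cPr w {ω | ty ω = 0} {ω | ys ω = 1} + a = 1 := by
    rw [ha_def]
    unfold cPr
    rw [← add_div, Pr_split w ty, div_self (ne_of_gt hys1)]
  have ha2 : (1:ℝ)/2 < a := by linarith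
  have hb2 : b < 1/2 := hn1
  have hba : b ≤ a := le_of_lt (lt_trans hb2 ha2)
  -- p values
  have hpv : ∀ ω, p ω = a ∨ p ω = b := by
    intro ω
    rcases fin2 (ys ω) with h | h
    · right; rw [hp ω, h]
    · left; rw [hp ω, h]
  have hpa : ∀ ω, p ω ≤ a := fun ω => by rcases hpv ω with h | h <;> rw [h] <;> linarith
  have hpb : ∀ ω, b ≤ p ω := fun ω => by rcases hpv ω with h | h <;> rw [h] <;> linarith
  have hLBa : LB ≤ a := hLB ▸ cExp_le w hw p _ hty1 a hpa
  have hbUB : b ≤ UB := hUB ▸ le_cExp w hw p _ hty0 b hpb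
  intro ω hω
  simp only [Set.mem_setOf_eq] at hω
  rcases fin2 (ty ω) with hty | hty <;> rcases fin2 (ys ω) with hys | hys
  · exact absurd (hty.trans hys.symm) hω
  · left
    refine ⟨hty, ?_⟩
    have : p ω = a := by rw [hp ω, hys]
    simp only [Set.mem_setOf_eq, this]
    exact hLBa
  · right
    refine ⟨hty, ?_⟩
    have : p ω = b := by rw [hp ω, hys]
    simp only [Set.mem_setOf_eq, this]
    exact hbUB
  · exact absurd (hty.trans hys.symm) hω
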